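/- Let q: X → ℝ satisfy ∑_{i=1}^k q(x_i) = 1 and q(x_i) = 0 for i > k, let m_k = ∑_{i=1}^k p(x_i), and define u(x_i) = q(x_i)/p(x_i) - 1/m_k on {x_1,...,x_k}. Then the χ²-divergence decomposes as d_{χ²}(q,p) = m_k · E_k(u²) + (1-m_k)/m_k, where E_k denotes expectation with respect to the normalized restriction p_k(x_i) = p(x_i)/m_k. -/

import Mathlib

open Finset

/-- Decomposition of the χ²-divergence: for `q` supported on `{x_1,...,x_k}` with
total mass 1, `d_{χ²}(q,p) = m_k · E_k(u²) + (1-m_k)/m_k`. -/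
theorem chi2_divergence_decomposition
    (n : ℕ) (p : Fin n → ℝ)
    (hp0 : ∀ i, 0 < p i) (hp1 : ∑ i, p i = 1)
    (k : Fin n) (q : Fin n → ℝ)
    (hq1 : ∑ i ∈ Finset.Iic k, q i = 1)
    (hq0 : ∀ i, k < i → q i = 0) :
    let m : ℝ := ∑ i ∈ Finset.Iic k, p i
    let u : Fin n → ℝ := fun i => q i / p i - 1 / m
    ∑ i, (q i - p i) ^ 2 / p i =
      m * (∑ i ∈ Finset.Iic k, (p i / m) * (u i) ^ 2) + (1 - m) / m := by
  intro m u
  have hm : 0 < m := Finset.sum_pos (fun i _ => hp0 i) ⟨k, Finset.mem_Iic.mpr le_rfl⟩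
  have hmne : m ≠ 0 := ne_of_gt hm
  -- split the full sum
  have hsplit : ∑ i, (q i - p i) ^ 2 / p i
      = ∑ i ∈ Finset.Iic k, (q i - p i) ^ 2 / p i
        + ∑ i ∈ (Finset.Iic k)ᶜ, (q i - p i) ^ 2 / p i :=
    (Finset.sum_add_sum_compl _ _).symm
  have hpm : ∑ i ∈ (Finset.Iic k)ᶜ, p i = 1 - m := by
    have h := Finset.sum_add_sum_compl (Finset.Iic k) p
    rw [hp1] at h
    linarith
  have hcompl : ∑ i ∈ (Finset.Iic k)ᶜ, (q i - p i) ^ 2 / p i = 1 - m := by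
    rw [← hpm]
    apply Finset.sum_congr rfl
    intro i hi
    have hk : k < i := by
      simpa [Finset.mem_compl, Finset.mem_Iic, not_le] using hi
    have hpne := (hp0 i).ne'
    rw [hq0 i hk]
    field_simp
    ring
  have hL : ∑ i ∈ Finset.Iic k, (q i - p i) ^ 2 / p i
      = (∑ i ∈ Finset.Iic k, (q i) ^ 2 / p i) - 2 * 1 + m := by
    have : ∑ i ∈ Finset.Iic k, (q i - p i) ^ 2 / p i
        = ∑ i ∈ Finset.Iic k, ((q i) ^ 2 / p i - 2 * q i + p i) := by
      apply Finset.sum_congr rfl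
      intro i _
      have hpne := (hp0 i).ne'
      field_simp
      ring
    rw [this, Finset.sum_add_distrib, Finset.sum_sub_distrib, ← Finset.mul_sum, hq1]
  have hR : m * (∑ i ∈ Finset.Iic k, (p i / m) * (u i) ^ 2)
      = (∑ i ∈ Finset.Iic k, (q i) ^ 2 / p i) - (2 / m) * 1 + (1 / m ^ 2) * m := by
    have h1 : m * (∑ i ∈ Finset.Iic k, (p i / m) * (u i) ^ 2)
        = ∑ i ∈ Finset.Iic k, ((q i) ^ 2 / p i - (2 / m) * q i + (1 / m ^ 2) * p i) := by
      rw [Finset.mul_sum]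
      apply Finset.sum_congr rfl
      intro i _
      have hpne := (hp0 i).ne'
      simp only [u]
      field_simp
      ring
    rw [h1, Finset.sum_add_distrib, Finset.sum_sub_distrib, ← Finset.mul_sum,
      ← Finset.mul_sum, hq1]
  rw [hsplit, hcompl, hL, hR]
  field_simp
  ring
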